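/- For M ∈ ℂ with Re M > 0, the kernel K₁(z,t;M) = 4^{−M} e^{−Mt} ((e^t+1)² − z²)^{−1/2+M} F(1/2 − M, 1/2 − M; 1; ((e^t−1)² − z²)/((e^t+1)² − z²)) satisfies: for every a > −1 there is a constant C(M,a) such that ∫₀^{e^t − 1} r^a |K₁(r,t;M)| dr ≤ C(M,a) e^{−(Re M)t} (e^t − 1)^{a+1} (e^t + 1)^{2 Re M − 1} for all t > 0. -/

import Mathlib

open Real

/-- Gauss hypergeometric function ₂F₁ (complex version), as a power series. -/
noncomputable def hypC (a b c z : ℂ) : ℂ :=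
  ∑' n : ℕ, (∏ k ∈ Finset.range n, ((a + k) * (b + k) / ((c + k) * (k + 1)))) * z ^ n

/-- The kernel K₁(z,t;M). -/
noncomputable def K₁ (z t : ℝ) (M : ℂ) : ℂ :=
  (4 : ℂ) ^ (-M) * Complex.exp (-M * t) *
    (((Real.exp t + 1) ^ 2 - z ^ 2 : ℝ) : ℂ) ^ (-(1/2 : ℂ) + M) *
    hypC (1/2 - M) (1/2 - M) 1
      ((((Real.exp t - 1) ^ 2 - z ^ 2) / ((Real.exp t + 1) ^ 2 - z ^ 2) : ℝ) : ℂ)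

open MeasureTheory

noncomputable def hypCoef (M : ℂ) (n : ℕ) : ℂ :=
  ∏ k ∈ Finset.range n, ((1/2 - M + k) * (1/2 - M + k) / ((1 + k) * ((k : ℂ) + 1)))

lemma summable_hypCoef (M : ℂ) (hM : 0 < M.re) : Summable (fun n => ‖hypCoef M n‖) := by
  set x := M.re with hx
  set y := M.im with hy
  set δ : ℝ := 1 + min x (1/2) with hδdef
  have hδ1 : 1 < δ := by
    have : 0 < min x (1/2) := lt_min hM (by norm_num)
    simp only [hδdef]; linarith
  set u : ℕ → ℝ := fun n => ‖hypCoef M n‖ with hu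
  have hu0 : ∀ n, 0 ≤ u n := fun n => norm_nonneg _
  have h1n : ∀ n : ℕ, ‖(1 : ℂ) + n‖ = (n : ℝ) + 1 := by
    intro n
    have : ((1 : ℂ) + n) = (((n : ℝ) + 1 : ℝ) : ℂ) := by push_cast; ring
    rw [this, Complex.norm_real, Real.norm_of_nonneg (by positivity)]
  have hn1 : ∀ n : ℕ, ‖(n : ℂ) + 1‖ = (n : ℝ) + 1 := by
    intro n
    have : ((n : ℂ) + 1) = (((n : ℝ) + 1 : ℝ) : ℂ) := by push_cast; ring
    rw [this, Complex.norm_real, Real.norm_of_nonneg (by positivity)]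
  have hrec : ∀ n : ℕ, u (n+1) = u n * ‖1/2 - M + (n : ℂ)‖^2 / ((n : ℝ) + 1)^2 := by
    intro n
    simp only [hu, hypCoef, Finset.prod_range_succ, norm_mul, norm_div, h1n, hn1, sq]
    ring
  obtain ⟨N₀, hN₀⟩ : ∃ N₀ : ℕ, ∀ n, N₀ ≤ n →
      ‖1/2 - M + (n : ℂ)‖^2 ≤ ((n : ℝ) + 1) * (((n : ℝ) + 1) - δ) := by
    refine ⟨⌈((1/2 + x)^2 + y^2)/x⌉₊, fun n hn => ?_⟩
    have h1 : ((1/2 + x)^2 + y^2)/x ≤ (n : ℝ) :=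
      le_trans (Nat.le_ceil _) (by exact_mod_cast hn)
    have h2 : (1/2 + x)^2 + y^2 ≤ (n : ℝ) * x := by rwa [div_le_iff₀ hM] at h1
    have hre : (1/2 - M + (n : ℂ)).re = 1/2 - x + n := by simp [hx]
    have him : (1/2 - M + (n : ℂ)).im = -y := by simp [hy]
    have h3 : ‖1/2 - M + (n : ℂ)‖^2 = (1/2 - x + n)^2 + (-y)^2 := by
      rw [← hre, ← him, Complex.sq_norm, Complex.normSq_apply]; ring
    rw [h3]
    have hmin : min x (1/2) ≤ x := min_le_left _ _
    have h4 : x * (n : ℝ) ≤ (2*x - min x (1/2)) * ((n : ℝ) + 1) := by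
      have hxm : x ≤ 2*x - min x (1/2) := by linarith
      have hn0 : (0 : ℝ) ≤ (n : ℝ) := Nat.cast_nonneg n
      nlinarith [hM.le]
    simp only [hδdef]
    nlinarith [h2, h4]
  have step : ∀ n, N₀ ≤ n → (δ - 1) * u n ≤ (n : ℝ) * u n - ((n : ℝ) + 1) * u (n+1) := by
    intro n hn
    have hp : (0 : ℝ) < (n : ℝ) + 1 := by positivity
    have key := hN₀ n hn
    have h6 : u n * ‖1/2 - M + (n : ℂ)‖^2 ≤ u n * (((n : ℝ) + 1) * (((n : ℝ) + 1) - δ)) :=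
      mul_le_mul_of_nonneg_left key (hu0 n)
    have h5 : ((n : ℝ) + 1) * u (n+1) ≤ (((n : ℝ) + 1) - δ) * u n := by
      rw [hrec n]
      have e : ((n:ℝ)+1) * (u n * ‖1/2 - M + (n : ℂ)‖^2 / ((n : ℝ) + 1)^2)
          = (u n * ‖1/2 - M + (n : ℂ)‖^2) / ((n : ℝ) + 1) := by field_simp
      rw [e, div_le_iff₀ hp]
      nlinarith [h6]
    nlinarith [h5]
  have hshift : Summable (fun i : ℕ => u (i + N₀)) := by
    apply summable_of_sum_range_le (c := (N₀ : ℝ) * u N₀ / (δ - 1)) (fun n => hu0 _)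
    intro n
    have hle : ∀ i ∈ Finset.range n, (δ - 1) * u (i + N₀) ≤
        (((i + N₀ : ℕ)) : ℝ) * u (i + N₀) - (((i + 1 + N₀ : ℕ)) : ℝ) * u (i + 1 + N₀) := by
      intro i _
      have h := step (i + N₀) (Nat.le_add_left _ _)
      have e1 : i + 1 + N₀ = (i + N₀) + 1 := by omega
      rw [e1]
      push_cast
      convert h using 3 <;> push_cast <;> ring
    have htel : ∑ i ∈ Finset.range n, ((((i + N₀ : ℕ)) : ℝ) * u (i + N₀) -
        (((i + 1 + N₀ : ℕ)) : ℝ) * u (i + 1 + N₀)) =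
        ((N₀ : ℝ)) * u N₀ - (((n + N₀ : ℕ)) : ℝ) * u (n + N₀) := by
      have := Finset.sum_range_sub' (f := fun i => (((i + N₀ : ℕ)) : ℝ) * u (i + N₀)) (n := n)
      simpa using this
    have hsumle : (δ - 1) * ∑ i ∈ Finset.range n, u (i + N₀) ≤ (N₀ : ℝ) * u N₀ := by
      rw [Finset.mul_sum]
      calc ∑ i ∈ Finset.range n, (δ - 1) * u (i + N₀)
          ≤ ∑ i ∈ Finset.range n, ((((i + N₀ : ℕ)) : ℝ) * u (i + N₀) -
            (((i + 1 + N₀ : ℕ)) : ℝ) * u (i + 1 + N₀)) := Finset.sum_le_sum hle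
        _ = ((N₀ : ℝ)) * u N₀ - (((n + N₀ : ℕ)) : ℝ) * u (n + N₀) := htel
        _ ≤ (N₀ : ℝ) * u N₀ := by
            have := hu0 (n + N₀)
            have : (0:ℝ) ≤ (((n + N₀ : ℕ)) : ℝ) * u (n + N₀) := by positivity
            linarith
    rw [le_div_iff₀ (by linarith : (0:ℝ) < δ - 1)]
    linarith [hsumle]
  exact (summable_nat_add_iff N₀).mp hshift

noncomputable def CF (M : ℂ) : ℝ := ∑' n, ‖hypCoef M n‖

lemma hypC_eq (M : ℂ) (z : ℂ) : hypC (1/2 - M) (1/2 - M) 1 z = ∑' n : ℕ, hypCoef M n * z ^ n := rfl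

lemma CF_nonneg (M : ℂ) : 0 ≤ CF M := tsum_nonneg (fun n => norm_nonneg _)

lemma hyp_le (M : ℂ) (hM : 0 < M.re) (z : ℂ) (hz : ‖z‖ ≤ 1) :
    ‖hypC (1/2 - M) (1/2 - M) 1 z‖ ≤ CF M := by
  rw [hypC_eq]
  have hs := summable_hypCoef M hM
  have hterm : ∀ n, ‖hypCoef M n * z ^ n‖ ≤ ‖hypCoef M n‖ := by
    intro n
    rw [norm_mul]
    have h1 : ‖z ^ n‖ ≤ 1 := by
      rw [norm_pow]
      exact pow_le_one₀ (norm_nonneg z) hz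
    nlinarith [norm_nonneg (hypCoef M n), norm_nonneg (z ^ n)]
  have hsum : Summable (fun n => ‖hypCoef M n * z ^ n‖) :=
    hs.of_nonneg_of_le (fun n => norm_nonneg _) hterm
  calc ‖∑' n : ℕ, hypCoef M n * z ^ n‖ ≤ ∑' n, ‖hypCoef M n * z ^ n‖ :=
        norm_tsum_le_tsum_norm hsum
    _ ≤ ∑' n, ‖hypCoef M n‖ := hsum.tsum_le_tsum hterm hs
    _ = CF M := rfl

lemma hyp_contOn (M : ℂ) (hM : 0 < M.re) :
    ContinuousOn (fun z => hypC (1/2 - M) (1/2 - M) 1 z) (Metric.closedBall (0:ℂ) 1) := by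
  simp only [hypC_eq]
  apply continuousOn_tsum (u := fun n => ‖hypCoef M n‖)
    (fun n => (continuous_const.mul (continuous_pow n)).continuousOn)
    (summable_hypCoef M hM)
  intro n z hz
  show ‖hypCoef M n * z ^ n‖ ≤ _
  rw [norm_mul, norm_pow]
  have hz1 : ‖z‖ ≤ 1 := by simpa [Complex.dist_eq] using Metric.mem_closedBall.mp hz
  nlinarith [norm_nonneg (hypCoef M n), pow_le_one₀ (a := ‖z‖) (norm_nonneg z) hz1 (n := n),
    pow_nonneg (norm_nonneg z) n]

lemma norm_K₁_eq (M : ℂ) (t r : ℝ) (hw : 0 < (Real.exp t + 1)^2 - r^2) :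
    ‖K₁ r t M‖ = ‖(4:ℂ)^(-M)‖ * Real.exp (-M.re * t) *
      ((Real.exp t + 1)^2 - r^2) ^ (M.re - 1/2) *
      ‖hypC (1/2 - M) (1/2 - M) 1
        ((((Real.exp t - 1)^2 - r^2)/((Real.exp t + 1)^2 - r^2) : ℝ) : ℂ)‖ := by
  have e1 : ‖Complex.exp (-M * t)‖ = Real.exp (-M.re * t) := by
    rw [Complex.norm_exp]
    congr 1
    simp [Complex.mul_re]
  have e2 : ‖(((Real.exp t + 1)^2 - r^2 : ℝ) : ℂ) ^ (-(1/2 : ℂ) + M)‖ =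
      ((Real.exp t + 1)^2 - r^2) ^ (M.re - 1/2) := by
    rw [Complex.norm_cpow_eq_rpow_re_of_pos hw]
    congr 1
    simp
    ring
  unfold K₁
  rw [norm_mul, norm_mul, norm_mul, e1, e2]

lemma K₁_bound (M : ℂ) (hM : 0 < M.re) (t r : ℝ) (ht : 0 < t) (hr0 : 0 ≤ r)
    (hrA : r < Real.exp t - 1) :
    ‖K₁ r t M‖ ≤ ‖(4:ℂ)^(-M)‖ * CF M * Real.exp (-M.re * t) *
      ((Real.exp t + 1) ^ (2*M.re - 1) *
        (1 - r/(Real.exp t - 1)) ^ (min (M.re - 1/2) 0)) := by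
  have hE : 1 < Real.exp t := by
    calc (1:ℝ) = Real.exp 0 := Real.exp_zero.symm
      _ < Real.exp t := Real.exp_lt_exp.mpr ht
  have hA : 0 < Real.exp t - 1 := by linarith
  have hB : 0 < Real.exp t + 1 := by linarith
  have hw : 0 < (Real.exp t + 1)^2 - r^2 := by nlinarith
  have hq : 0 < 1 - r/(Real.exp t - 1) := by
    rw [sub_pos, div_lt_one hA]; exact hrA
  rw [norm_K₁_eq M t r hw]
  have hhyp : ‖hypC (1/2 - M) (1/2 - M) 1
      ((((Real.exp t - 1)^2 - r^2)/((Real.exp t + 1)^2 - r^2) : ℝ) : ℂ)‖ ≤ CF M := by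
    apply hyp_le M hM
    rw [Complex.norm_real, Real.norm_eq_abs]
    rw [abs_of_nonneg (div_nonneg (by nlinarith) hw.le)]
    rw [div_le_one hw]
    nlinarith
  have hBpow : (((Real.exp t + 1)^2 : ℝ)) ^ (M.re - 1/2) = (Real.exp t + 1) ^ (2*M.re - 1) := by
    rw [← Real.rpow_natCast (Real.exp t + 1) 2, ← Real.rpow_mul hB.le]
    congr 1
    push_cast
    ring
  have hpow : ((Real.exp t + 1)^2 - r^2) ^ (M.re - 1/2) ≤
      (Real.exp t + 1) ^ (2*M.re - 1) * (1 - r/(Real.exp t - 1)) ^ (min (M.re - 1/2) 0) := by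
    rcases le_or_gt 0 (M.re - 1/2) with hs | hs
    · rw [min_eq_right hs, Real.rpow_zero, mul_one]
      calc ((Real.exp t + 1)^2 - r^2) ^ (M.re - 1/2)
          ≤ (((Real.exp t + 1)^2 : ℝ)) ^ (M.re - 1/2) :=
            Real.rpow_le_rpow hw.le (by nlinarith) hs
        _ = _ := hBpow
    · rw [min_eq_left hs.le]
      have hlow : (Real.exp t + 1)^2 * (1 - r/(Real.exp t - 1)) ≤ (Real.exp t + 1)^2 - r^2 := by
        have key : r^2 ≤ (Real.exp t + 1)^2 * (r/(Real.exp t - 1)) := by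
          rw [← mul_div_assoc, le_div_iff₀ hA]
          nlinarith [mul_nonneg (mul_nonneg (sub_nonneg.mpr hrA.le) hr0) hA.le,
            mul_nonneg hr0 (Real.exp_pos t).le]
        nlinarith [key]
      calc ((Real.exp t + 1)^2 - r^2) ^ (M.re - 1/2)
          ≤ ((Real.exp t + 1)^2 * (1 - r/(Real.exp t - 1))) ^ (M.re - 1/2) :=
            Real.rpow_le_rpow_of_nonpos (by positivity) hlow hs.le
        _ = _ := by rw [Real.mul_rpow (by positivity) hq.le, hBpow]
  calc ‖(4:ℂ)^(-M)‖ * Real.exp (-M.re * t) * ((Real.exp t + 1)^2 - r^2) ^ (M.re - 1/2) *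
        ‖hypC (1/2 - M) (1/2 - M) 1
          ((((Real.exp t - 1)^2 - r^2)/((Real.exp t + 1)^2 - r^2) : ℝ) : ℂ)‖
      ≤ ‖(4:ℂ)^(-M)‖ * Real.exp (-M.re * t) *
        ((Real.exp t + 1) ^ (2*M.re - 1) * (1 - r/(Real.exp t - 1)) ^ (min (M.re - 1/2) 0)) *
        CF M := by
        apply mul_le_mul (mul_le_mul_of_nonneg_left hpow (by positivity)) hhyp
          (norm_nonneg _) ?_
        have h1 : (0:ℝ) ≤ (1 - r/(Real.exp t - 1)) ^ (min (M.re - 1/2) 0) :=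
          Real.rpow_nonneg hq.le _
        positivity
    _ = _ := by ring

lemma beta_integrable (a s' : ℝ) (ha : -1 < a) (hs : -1 < s') :
    IntervalIntegrable (fun u : ℝ => u ^ a * (1-u) ^ s') volume 0 1 := by
  have h1 : IntervalIntegrable (fun u : ℝ => u ^ a * (1-u) ^ s') volume 0 (1/2) := by
    apply IntervalIntegrable.mul_continuousOn (intervalIntegral.intervalIntegrable_rpow' ha)
    apply ContinuousOn.rpow_const (continuousOn_const.sub continuousOn_id)
    intro x hx
    rw [Set.uIcc_of_le (by norm_num : (0:ℝ) ≤ 1/2)] at hx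
    exact Or.inl (ne_of_gt (by simp only [Pi.sub_apply, id_eq]; linarith [hx.2]))
  have h2 : IntervalIntegrable (fun u : ℝ => u ^ a * (1-u) ^ s') volume (1/2) 1 := by
    apply IntervalIntegrable.continuousOn_mul (g := fun u : ℝ => u ^ a)
      (f := fun u : ℝ => (1-u) ^ s')
    · have h : IntervalIntegrable (fun x : ℝ => x ^ s') volume 0 (1/2) :=
        intervalIntegral.intervalIntegrable_rpow' hs
      have h' := h.comp_sub_left 1
      norm_num at h'
      exact h'.symm
    · apply ContinuousOn.rpow_const continuousOn_id
      intro x hx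
      rw [Set.uIcc_of_le (by norm_num : (1:ℝ)/2 ≤ 1)] at hx
      exact Or.inl (ne_of_gt (by simp only [id_eq]; linarith [hx.1]))
  exact h1.trans h2

theorem stmt8 (M : ℂ) (hM : 0 < M.re) (a : ℝ) (ha : a > -1) :
    ∃ C : ℝ, ∀ t : ℝ, 0 < t →
      (∫ r in (0:ℝ)..(Real.exp t - 1), r ^ a * ‖K₁ r t M‖) ≤
        C * Real.exp (-M.re * t) * (Real.exp t - 1) ^ (a + 1) *
          (Real.exp t + 1) ^ (2 * M.re - 1) := by
  have hs'1 : (-1 : ℝ) < min (M.re - 1/2) 0 := lt_min (by linarith) (by norm_num)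
  have hβint := beta_integrable a (min (M.re - 1/2) 0) ha hs'1
  refine ⟨‖(4:ℂ)^(-M)‖ * CF M * (∫ u in (0:ℝ)..1, u ^ a * (1-u) ^ (min (M.re - 1/2) 0)), ?_⟩
  intro t ht
  have hE : 1 < Real.exp t := by
    calc (1:ℝ) = Real.exp 0 := Real.exp_zero.symm
      _ < Real.exp t := Real.exp_lt_exp.mpr ht
  have hA : 0 < Real.exp t - 1 := by linarith
  have hB : 0 < Real.exp t + 1 := by linarith
  have hwpos : ∀ r ∈ Set.Ioc (0:ℝ) (Real.exp t - 1), 0 < (Real.exp t + 1)^2 - r^2 := by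
    intro r hr
    nlinarith [hr.1, hr.2]
  -- integrability of the majorant's core
  have hg0 : IntervalIntegrable
      (fun r : ℝ => r ^ a * (1 - r/(Real.exp t - 1)) ^ (min (M.re - 1/2) 0))
      volume 0 (Real.exp t - 1) := by
    have h1 : IntervalIntegrable
        (fun u : ℝ => (Real.exp t - 1)^a * (u ^ a * (1-u) ^ (min (M.re - 1/2) 0)))
        volume 0 1 := hβint.const_mul _
    have h2 := h1.comp_mul_right (c := (Real.exp t - 1)⁻¹)
    have e3 : (0 : ℝ) / (Real.exp t - 1)⁻¹ = 0 := by simp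
    have e4 : (1 : ℝ) / (Real.exp t - 1)⁻¹ = Real.exp t - 1 := by
      field_simp
    rw [e3, e4] at h2
    rw [intervalIntegrable_iff, Set.uIoc_of_le hA.le] at h2 ⊢
    apply h2.congr_fun ?_ measurableSet_Ioc
    intro r hr
    simp only [← div_eq_mul_inv]
    rw [Real.div_rpow hr.1.le hA.le]
    have hAa : (Real.exp t - 1) ^ a ≠ 0 := (Real.rpow_pos_of_pos hA a).ne'
    field_simp
  -- the majorant
  have hgint : IntervalIntegrable
      (fun r : ℝ => (‖(4:ℂ)^(-M)‖ * CF M * Real.exp (-M.re * t) *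
        (Real.exp t + 1) ^ (2*M.re - 1)) *
        (r ^ a * (1 - r/(Real.exp t - 1)) ^ (min (M.re - 1/2) 0)))
      volume 0 (Real.exp t - 1) := hg0.const_mul _
  -- pointwise bound on Ico
  have key : ∀ r ∈ Set.Ico (0:ℝ) (Real.exp t - 1),
      r ^ a * ‖K₁ r t M‖ ≤ (‖(4:ℂ)^(-M)‖ * CF M * Real.exp (-M.re * t) *
        (Real.exp t + 1) ^ (2*M.re - 1)) *
        (r ^ a * (1 - r/(Real.exp t - 1)) ^ (min (M.re - 1/2) 0)) := by
    intro r hr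
    have h := K₁_bound M hM t r ht hr.1 hr.2
    calc r ^ a * ‖K₁ r t M‖
        ≤ r ^ a * (‖(4:ℂ)^(-M)‖ * CF M * Real.exp (-M.re * t) *
          ((Real.exp t + 1) ^ (2*M.re - 1) *
            (1 - r/(Real.exp t - 1)) ^ (min (M.re - 1/2) 0))) :=
          mul_le_mul_of_nonneg_left h (Real.rpow_nonneg hr.1 a)
      _ = _ := by ring
  -- continuity of the integrand on Ioc
  have hcont : ContinuousOn (fun r : ℝ => r ^ a * ‖K₁ r t M‖)
      (Set.Ioc 0 (Real.exp t - 1)) := by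
    apply ContinuousOn.mul
    · exact ContinuousOn.rpow_const continuousOn_id (fun r hr => Or.inl (ne_of_gt hr.1))
    apply ContinuousOn.norm
    show ContinuousOn (fun r : ℝ => K₁ r t M) _
    unfold K₁
    apply ContinuousOn.mul
    · apply ContinuousOn.mul
      · exact continuousOn_const
      · apply ContinuousOn.cpow
        · exact (Complex.continuous_ofReal.comp
            (continuous_const.sub (continuous_pow 2))).continuousOn
        · exact continuousOn_const
        · intro r hr
          rw [Complex.mem_slitPlane_iff]
          left
          rw [Complex.ofReal_re]
          exact hwpos r hr
    · apply (hyp_contOn M hM).comp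
      · apply Complex.continuous_ofReal.comp_continuousOn
        apply ContinuousOn.div
          ((continuous_const.sub (continuous_pow 2)).continuousOn :
            ContinuousOn (fun r : ℝ => (Real.exp t - 1)^2 - r^2) _)
          ((continuous_const.sub (continuous_pow 2)).continuousOn :
            ContinuousOn (fun r : ℝ => (Real.exp t + 1)^2 - r^2) _)
        intro r hr
        exact (hwpos r hr).ne'
      · intro r hr
        rw [Metric.mem_closedBall, Complex.dist_eq, sub_zero,
          Complex.norm_real, Real.norm_eq_abs]
        have h1 : 0 ≤ ((Real.exp t - 1)^2 - r^2) / ((Real.exp t + 1)^2 - r^2) :=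
          div_nonneg (by nlinarith [hr.1, hr.2]) (hwpos r hr).le
        rw [abs_of_nonneg h1, div_le_one (hwpos r hr)]
        nlinarith [hr.1.le]
  -- integrability of the integrand
  have hfint : IntervalIntegrable (fun r : ℝ => r ^ a * ‖K₁ r t M‖)
      volume 0 (Real.exp t - 1) := by
    rw [intervalIntegrable_iff, Set.uIoc_of_le hA.le]
    have hgint' : IntegrableOn
        (fun r : ℝ => (‖(4:ℂ)^(-M)‖ * CF M * Real.exp (-M.re * t) *
          (Real.exp t + 1) ^ (2*M.re - 1)) *
          (r ^ a * (1 - r/(Real.exp t - 1)) ^ (min (M.re - 1/2) 0)))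
        (Set.Ioc 0 (Real.exp t - 1)) := by
      have := hgint
      rwa [intervalIntegrable_iff, Set.uIoc_of_le hA.le] at this
    apply hgint'.mono' (hcont.aestronglyMeasurable measurableSet_Ioc)
    have hne : ∀ᵐ r ∂(volume.restrict (Set.Ioc 0 (Real.exp t - 1))), r ≠ Real.exp t - 1 := by
      refine ae_iff.mpr ?_
      have hset : {r : ℝ | ¬ r ≠ Real.exp t - 1} = {Real.exp t - 1} := by ext; simp
      rw [hset]
      exact le_antisymm (le_trans (Measure.restrict_apply_le _ _) (by simp)) zero_le
    filter_upwards [ae_restrict_mem measurableSet_Ioc, hne] with r hr hrA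
    have hk := key r ⟨hr.1.le, lt_of_le_of_ne hr.2 hrA⟩
    rw [Real.norm_eq_abs, abs_of_nonneg (mul_nonneg (Real.rpow_nonneg hr.1.le a) (norm_nonneg _))]
    exact hk
  -- substitution: value of the beta-type integral
  have hsub : (∫ r in (0:ℝ)..(Real.exp t - 1),
      r ^ a * (1 - r/(Real.exp t - 1)) ^ (min (M.re - 1/2) 0)) =
      (Real.exp t - 1) ^ (a+1) * ∫ u in (0:ℝ)..1, u ^ a * (1-u) ^ (min (M.re - 1/2) 0) := by
    have hco : Set.EqOn
        (fun r : ℝ => r ^ a * (1 - r/(Real.exp t - 1)) ^ (min (M.re - 1/2) 0))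
        (fun r : ℝ => (fun u : ℝ => (Real.exp t - 1)^a * (u ^ a * (1-u) ^ (min (M.re - 1/2) 0)))
          (r / (Real.exp t - 1)))
        (Set.uIcc 0 (Real.exp t - 1)) := by
      intro r hr
      rw [Set.uIcc_of_le hA.le] at hr
      simp only []
      rw [Real.div_rpow hr.1 hA.le]
      have hAa : (Real.exp t - 1) ^ a ≠ 0 := (Real.rpow_pos_of_pos hA a).ne'
      field_simp
    rw [intervalIntegral.integral_congr hco,
      intervalIntegral.integral_comp_div
        (f := fun u : ℝ => (Real.exp t - 1)^a * (u ^ a * (1-u) ^ (min (M.re - 1/2) 0))) hA.ne',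
      zero_div, div_self hA.ne', intervalIntegral.integral_const_mul, smul_eq_mul,
      Real.rpow_add hA a 1, Real.rpow_one]
    ring
  -- put it together
  calc (∫ r in (0:ℝ)..(Real.exp t - 1), r ^ a * ‖K₁ r t M‖)
      ≤ ∫ r in (0:ℝ)..(Real.exp t - 1),
          (‖(4:ℂ)^(-M)‖ * CF M * Real.exp (-M.re * t) *
            (Real.exp t + 1) ^ (2*M.re - 1)) *
          (r ^ a * (1 - r/(Real.exp t - 1)) ^ (min (M.re - 1/2) 0)) := by
        apply intervalIntegral.integral_mono_ae_restrict hA.le hfint hgint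
        have hne' : ∀ᵐ r ∂(volume.restrict (Set.Icc 0 (Real.exp t - 1))),
            r ≠ Real.exp t - 1 := by
          refine ae_iff.mpr ?_
          have hset : {r : ℝ | ¬ r ≠ Real.exp t - 1} = {Real.exp t - 1} := by ext; simp
          rw [hset]
          exact le_antisymm (le_trans (Measure.restrict_apply_le _ _) (by simp)) zero_le
        filter_upwards [ae_restrict_mem measurableSet_Icc, hne'] with r hr hrA
        exact key r ⟨hr.1, lt_of_le_of_ne hr.2 hrA⟩
    _ = (‖(4:ℂ)^(-M)‖ * CF M * Real.exp (-M.re * t) *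
          (Real.exp t + 1) ^ (2*M.re - 1)) *
        ((Real.exp t - 1) ^ (a+1) * ∫ u in (0:ℝ)..1, u ^ a * (1-u) ^ (min (M.re - 1/2) 0)) := by
        rw [intervalIntegral.integral_const_mul, hsub]
    _ = _ := by ring
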